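/- arXiv:1010.1018 — 2 statements merged into one kernel-verified Lean document; each statement's English description precedes it below -/
import Mathlib

section
/- Let A be an invertible d₁×d₁ complex matrix and B an invertible d₂×d₂ complex matrix, and let X₀,…,X_m and Y₀,…,Y_m be d₁×d₂ complex matrices such that A Xᵢ = Yᵢ B and Xᵢ B† = A† Yᵢ for all 0 ≤ i ≤ m. Define U = A · ((A†A)^{1/2})⁻¹ and V = B · ((B†B)^{1/2})⁻¹, where (·)^{1/2} denotes the unique positive-semidefinite square root of a positive-semidefinite Hermitian matrix. Then U and V are unitary matrices and U Xᵢ V† = Yᵢ for all 0 ≤ i ≤ m. -/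
open Matrix
open scoped ComplexOrder

/-- The positive semidefinite square root of a positive semidefinite matrix
(Mathlib's December 2024 definition, since removed). -/
noncomputable def Matrix.PosSemidef.sqrt {n : Type*} [Fintype n] [DecidableEq n] {𝕜 : Type*}
    [RCLike 𝕜] {A : Matrix n n 𝕜} (hA : A.PosSemidef) : Matrix n n 𝕜 :=
  hA.1.eigenvectorUnitary.1 * diagonal ((↑) ∘ (√·) ∘ hA.1.eigenvalues) *
  (star hA.1.eigenvectorUnitary : Matrix n n 𝕜)

theorem Matrix.PosSemidef.sqrt_mul_self {n : Type*} [Fintype n] [DecidableEq n] {𝕜 : Type*}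
    [RCLike 𝕜] {A : Matrix n n 𝕜} (hA : A.PosSemidef) : hA.sqrt * hA.sqrt = A := by
  set W : Matrix n n 𝕜 := (hA.1.eigenvectorUnitary : Matrix n n 𝕜) with hW
  set sW : Matrix n n 𝕜 := (star hA.1.eigenvectorUnitary : Matrix n n 𝕜) with hsW
  have hWW' : sW * W = 1 := (Matrix.mem_unitaryGroup_iff').mp hA.1.eigenvectorUnitary.2
  set S : Matrix n n 𝕜 := diagonal ((↑) ∘ (√·) ∘ hA.1.eigenvalues) with hS
  have hD : S * S = diagonal (RCLike.ofReal ∘ hA.1.eigenvalues : n → 𝕜) := by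
    rw [hS, diagonal_mul_diagonal]; congr 1; funext i
    simp only [Function.comp_apply, ← RCLike.ofReal_mul,
      Real.mul_self_sqrt (hA.eigenvalues_nonneg i)]
  have hspec : A = W * diagonal (RCLike.ofReal ∘ hA.1.eigenvalues : n → 𝕜) * sW := by
    conv_lhs => rw [hA.1.spectral_theorem]
    rw [Unitary.conjStarAlgAut_apply]
  have hsq : hA.sqrt = W * S * sW := rfl
  rw [hsq]
  conv_rhs => rw [hspec]
  rw [← hD, show W * S * sW * (W * S * sW) = W * S * (sW * W) * S * sW by
    simp only [Matrix.mul_assoc], hWW', Matrix.mul_one]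
  simp only [Matrix.mul_assoc]

theorem Matrix.PosSemidef.posSemidef_sqrt {n : Type*} [Fintype n] [DecidableEq n] {𝕜 : Type*}
    [RCLike 𝕜] {A : Matrix n n 𝕜} (hA : A.PosSemidef) : hA.sqrt.PosSemidef := by
  have hd : (diagonal ((↑) ∘ (√·) ∘ hA.1.eigenvalues) : Matrix n n 𝕜).PosSemidef :=
    Matrix.PosSemidef.diagonal (fun i => by
      show (0 : 𝕜) ≤ ((√(hA.1.eigenvalues i) : ℝ) : 𝕜)
      exact RCLike.ofReal_nonneg.mpr (Real.sqrt_nonneg _))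
  have := hd.mul_mul_conjTranspose_same (hA.1.eigenvectorUnitary : Matrix n n 𝕜)
  rw [← Matrix.star_eq_conjTranspose] at this
  exact this

private lemma posDef_of_posSemidef_isUnit {n : ℕ} {M : Matrix (Fin n) (Fin n) ℂ}
    (hM : M.PosSemidef) (hu : IsUnit M) : M.PosDef := by
  refine posDef_iff_dotProduct_mulVec.mpr
    ⟨hM.1, fun v hv => lt_of_le_of_ne (hM.dotProduct_mulVec_nonneg v) fun h => hv ?_⟩
  have h0 : M *ᵥ v = 0 := (hM.dotProduct_mulVec_zero_iff v).mp h.symm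
  have hinj := Matrix.mulVec_injective_iff_isUnit.mpr hu
  exact hinj (by simpa using h0)

private lemma intertwine {d₁ d₂ : ℕ} {P : Matrix (Fin d₁) (Fin d₁) ℂ}
    {Q : Matrix (Fin d₂) (Fin d₂) ℂ} (hP : P.PosDef) (hQ : Q.PosDef)
    (X : Matrix (Fin d₁) (Fin d₂) ℂ) (h : P * P * X = X * (Q * Q)) :
    P * X = X * Q := by
  set Z := P * X - X * Q with hZ
  have hsum : P * Z + Z * Q = 0 := by
    have h' : P * (P * X) = X * (Q * Q) := by rw [← Matrix.mul_assoc, h]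
    simp only [hZ, Matrix.mul_sub, Matrix.sub_mul, Matrix.mul_assoc, h']
    abel
  have hkey : P * Z = -(Z * Q) := eq_neg_of_add_eq_zero_left hsum
  set W : Matrix (Fin d₂) (Fin d₂) ℂ := (hQ.1.eigenvectorUnitary : Matrix (Fin d₂) (Fin d₂) ℂ)
    with hW
  set D : Matrix (Fin d₂) (Fin d₂) ℂ := diagonal (RCLike.ofReal ∘ hQ.1.eigenvalues) with hD
  have hspec : Q = W * D * star W := by
    conv_lhs => rw [hQ.1.spectral_theorem]
    rw [Unitary.conjStarAlgAut_apply]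
  have hWW : W * star W = 1 := (Matrix.mem_unitaryGroup_iff).mp hQ.1.eigenvectorUnitary.2
  have hWW' : star W * W = 1 := (Matrix.mem_unitaryGroup_iff').mp hQ.1.eigenvectorUnitary.2
  have hZ' : P * (Z * W) = -((Z * W) * D) := by
    have h3 : Z * Q * W = Z * W * D := by
      rw [hspec]
      simp only [Matrix.mul_assoc, hWW', Matrix.mul_one]
    rw [← Matrix.mul_assoc, hkey, Matrix.neg_mul, h3]
  have hZW : Z * W = 0 := by
    ext i j
    set v : Fin d₁ → ℂ := fun i' => (Z * W) i' j with hv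
    have hvz : v = 0 := by
      have hPv : P *ᵥ v = (-(((hQ.1.eigenvalues j : ℝ) : ℂ))) • v := by
        ext i'
        have h4 : (P * (Z * W)) i' j = -((Z * W) i' j * (((hQ.1.eigenvalues j : ℝ)) : ℂ)) := by
          rw [hZ']
          simp [hD, Matrix.mul_diagonal]
        simpa [Matrix.mulVec, dotProduct, Matrix.mul_apply, hv, mul_comm] using h4
      by_contra hv0
      have hpos := hP.dotProduct_mulVec_pos hv0
      rw [hPv] at hpos
      have hvv : (0 : ℂ) < star v ⬝ᵥ v := Matrix.dotProduct_star_self_pos_iff.mpr hv0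
      have hevj : (0 : ℝ) < hQ.1.eigenvalues j := hQ.eigenvalues_pos j
      have h5 : star v ⬝ᵥ (-(((hQ.1.eigenvalues j : ℝ) : ℂ))) • v
          = -((((hQ.1.eigenvalues j : ℝ) : ℂ)) * (star v ⬝ᵥ v)) := by
        rw [dotProduct_smul, neg_smul, smul_eq_mul]
      rw [h5] at hpos
      have hge : (0:ℂ) < (((hQ.1.eigenvalues j : ℝ) : ℂ)) * (star v ⬝ᵥ v) := by
        apply mul_pos _ hvv
        exact_mod_cast hevj
      exact lt_asymm hge (neg_pos.mp hpos)
    exact congrFun hvz i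
  have hZ0 : Z = 0 := by
    calc Z = Z * W * star W := by rw [Matrix.mul_assoc, hWW, Matrix.mul_one]
    _ = 0 := by rw [hZW, Matrix.zero_mul]
  have := sub_eq_zero.mp hZ0
  exact this

private lemma unitary_half {d : ℕ} (A : Matrix (Fin d) (Fin d) ℂ) (hA : IsUnit A) :
    IsUnit (Matrix.posSemidef_conjTranspose_mul_self A).sqrt ∧
      (Matrix.posSemidef_conjTranspose_mul_self A).sqrt.PosDef ∧
      (A * ((Matrix.posSemidef_conjTranspose_mul_self A).sqrt)⁻¹)ᴴ *
        (A * ((Matrix.posSemidef_conjTranspose_mul_self A).sqrt)⁻¹) = 1 := by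
  set hPA := Matrix.posSemidef_conjTranspose_mul_self A with hhPA
  set P := hPA.sqrt with hP
  have hPP : P * P = Aᴴ * A := hPA.sqrt_mul_self
  have hAd : IsUnit A.det := (Matrix.isUnit_iff_isUnit_det A).mp hA
  have hAHd : IsUnit Aᴴ.det := by rw [Matrix.det_conjTranspose]; exact hAd.star
  have hPd : IsUnit P.det := by
    have : P.det * P.det = Aᴴ.det * A.det := by rw [← Matrix.det_mul, hPP, Matrix.det_mul]
    have h2 : IsUnit (P.det * P.det) := this ▸ hAHd.mul hAd
    exact isUnit_of_mul_isUnit_left h2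
  have hPu : IsUnit P := (Matrix.isUnit_iff_isUnit_det P).mpr hPd
  have hPdef : P.PosDef := posDef_of_posSemidef_isUnit hPA.posSemidef_sqrt hPu
  refine ⟨hPu, hPdef, ?_⟩
  have hPH : Pᴴ = P := hPA.posSemidef_sqrt.1
  have hPinvH : (P⁻¹)ᴴ = P⁻¹ := hPA.posSemidef_sqrt.1.inv
  rw [Matrix.conjTranspose_mul, hPinvH]
  calc P⁻¹ * Aᴴ * (A * P⁻¹) = P⁻¹ * (P * P) * P⁻¹ := by
        rw [Matrix.mul_assoc, ← Matrix.mul_assoc Aᴴ A P⁻¹, ← hPP, ← Matrix.mul_assoc]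
  _ = 1 := by
        rw [← Matrix.mul_assoc P⁻¹ P P, Matrix.nonsing_inv_mul P hPd, Matrix.one_mul,
          Matrix.mul_nonsing_inv P hPd]

/-- If invertible `A`, `B` solve `A Xᵢ = Yᵢ B` and `Xᵢ Bᴴ = Aᴴ Yᵢ`, then the polar unitary
factors `U = A (AᴴA)^{-1/2}`, `V = B (BᴴB)^{-1/2}` are unitary and satisfy `U Xᵢ Vᴴ = Yᵢ`. -/
theorem polar_factors_give_unitary_solution
    (d₁ d₂ m : ℕ)
    (A : Matrix (Fin d₁) (Fin d₁) ℂ) (B : Matrix (Fin d₂) (Fin d₂) ℂ)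
    (hA : IsUnit A) (hB : IsUnit B)
    (X Y : Fin (m + 1) → Matrix (Fin d₁) (Fin d₂) ℂ)
    (h1 : ∀ i, A * X i = Y i * B)
    (h2 : ∀ i, X i * Bᴴ = Aᴴ * Y i)
    (U : Matrix (Fin d₁) (Fin d₁) ℂ) (V : Matrix (Fin d₂) (Fin d₂) ℂ)
    (hU : U = A * ((Matrix.posSemidef_conjTranspose_mul_self A).sqrt)⁻¹)
    (hV : V = B * ((Matrix.posSemidef_conjTranspose_mul_self B).sqrt)⁻¹) :
    Uᴴ * U = 1 ∧ Vᴴ * V = 1 ∧ ∀ i, U * X i * Vᴴ = Y i := by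
  subst hU hV
  obtain ⟨hPu, hPdef, hUuni⟩ := unitary_half A hA
  obtain ⟨hQu, hQdef, hVuni⟩ := unitary_half B hB
  refine ⟨hUuni, hVuni, fun i => ?_⟩
  set P := (Matrix.posSemidef_conjTranspose_mul_self A).sqrt with hP
  set Q := (Matrix.posSemidef_conjTranspose_mul_self B).sqrt with hQ
  have hPP : P * P = Aᴴ * A := (Matrix.posSemidef_conjTranspose_mul_self A).sqrt_mul_self
  have hQQ : Q * Q = Bᴴ * B := (Matrix.posSemidef_conjTranspose_mul_self B).sqrt_mul_self
  have hPd : IsUnit P.det := (Matrix.isUnit_iff_isUnit_det P).mp hPu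
  have hQd : IsUnit Q.det := (Matrix.isUnit_iff_isUnit_det Q).mp hQu
  have hBd : IsUnit B.det := (Matrix.isUnit_iff_isUnit_det B).mp hB
  have hBHd : IsUnit Bᴴ.det := by rw [Matrix.det_conjTranspose]; exact hBd.star
  have hkey : P * P * X i = X i * (Q * Q) := by
    rw [hPP, hQQ]
    calc Aᴴ * A * X i = Aᴴ * (A * X i) := by rw [Matrix.mul_assoc]
    _ = Aᴴ * (Y i * B) := by rw [h1]
    _ = (Aᴴ * Y i) * B := by rw [Matrix.mul_assoc]
    _ = (X i * Bᴴ) * B := by rw [h2]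
    _ = X i * (Bᴴ * B) := by rw [Matrix.mul_assoc]
  have hPX : P * X i = X i * Q := intertwine hPdef hQdef (X i) hkey
  have hPinvX : P⁻¹ * X i = X i * Q⁻¹ := by
    calc P⁻¹ * X i = P⁻¹ * (X i * (Q * Q⁻¹)) := by
          rw [Matrix.mul_nonsing_inv Q hQd, Matrix.mul_one]
    _ = P⁻¹ * ((X i * Q) * Q⁻¹) := by simp only [Matrix.mul_assoc]
    _ = P⁻¹ * ((P * X i) * Q⁻¹) := by rw [hPX]
    _ = (P⁻¹ * P) * (X i * Q⁻¹) := by simp only [Matrix.mul_assoc]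
    _ = X i * Q⁻¹ := by rw [Matrix.nonsing_inv_mul P hPd, Matrix.one_mul]
  have hQinvH : (Q⁻¹)ᴴ = Q⁻¹ := (Matrix.posSemidef_conjTranspose_mul_self B).posSemidef_sqrt.1.inv
  rw [Matrix.conjTranspose_mul, hQinvH]
  calc A * P⁻¹ * X i * (Q⁻¹ * Bᴴ) = A * ((P⁻¹ * X i) * (Q⁻¹ * Bᴴ)) := by
        simp only [Matrix.mul_assoc]
  _ = A * ((X i * Q⁻¹) * (Q⁻¹ * Bᴴ)) := by rw [hPinvX]
  _ = A * X i * (Q⁻¹ * Q⁻¹) * Bᴴ := by simp only [Matrix.mul_assoc]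
  _ = A * X i * (Q * Q)⁻¹ * Bᴴ := by rw [Matrix.mul_inv_rev Q Q]
  _ = A * X i * (B⁻¹ * (Bᴴ)⁻¹) * Bᴴ := by rw [hQQ, Matrix.mul_inv_rev]
  _ = (A * X i) * B⁻¹ * ((Bᴴ)⁻¹ * Bᴴ) := by simp only [Matrix.mul_assoc]
  _ = Y i * (B * B⁻¹) := by
        rw [Matrix.nonsing_inv_mul Bᴴ hBHd, Matrix.mul_one, h1, Matrix.mul_assoc]
  _ = Y i := by rw [Matrix.mul_nonsing_inv B hBd, Matrix.mul_one]
end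

section
/- Let G be a unital ℂ-subalgebra of the n×n complex matrices and let A be an invertible n×n complex matrix with A ∈ G and A† ∈ G. Then the unitary factor U = A · ((A†A)^{1/2})⁻¹ of the polar decomposition of A is a unitary matrix belonging to G. -/
open Matrix Polynomial
open scoped ComplexOrder

lemma Matrix.PosSemidef.sqrt_mul_self' {m : ℕ} {H : Matrix (Fin m) (Fin m) ℂ} (hH : H.PosSemidef) :
    hH.sqrt * hH.sqrt = H := by
  have h2 : star (hH.1.eigenvectorUnitary : Matrix (Fin m) (Fin m) ℂ) * hH.1.eigenvectorUnitary = 1 :=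
    (Matrix.mem_unitaryGroup_iff').mp hH.1.eigenvectorUnitary.2
  conv_rhs => rw [hH.1.spectral_theorem, Unitary.conjStarAlgAut_apply]
  unfold Matrix.PosSemidef.sqrt
  rw [show ∀ a b c d e f : Matrix (Fin m) (Fin m) ℂ, a * b * c * (d * e * f) = a * (b * (c * d) * e) * f
    from fun a b c d e f => by noncomm_ring, h2, mul_one, diagonal_mul_diagonal]
  congr 3
  funext i
  simp only [Function.comp_apply]
  rw [← RCLike.ofReal_mul, Real.mul_self_sqrt (hH.eigenvalues_nonneg i)]

lemma Matrix.PosSemidef.sqrt_herm' {m : ℕ} {H : Matrix (Fin m) (Fin m) ℂ} (hH : H.PosSemidef) :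
    (hH.sqrt)ᴴ = hH.sqrt := by
  unfold Matrix.PosSemidef.sqrt
  rw [conjTranspose_mul, conjTranspose_mul, diagonal_conjTranspose, ← star_eq_conjTranspose,
    ← star_eq_conjTranspose, star_star, mul_assoc]
  congr 3
  funext i
  simp

/-- Conjugation by a unitary matrix as an algebra hom. -/
noncomputable def conjAlgHom {m : ℕ} (V : Matrix (Fin m) (Fin m) ℂ)
    (h1 : V * star V = 1) (h2 : star V * V = 1) :
    Matrix (Fin m) (Fin m) ℂ →ₐ[ℂ] Matrix (Fin m) (Fin m) ℂ where
  toFun M := V * M * star V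
  map_one' := by show V * 1 * star V = 1; rw [mul_one, h1]
  map_mul' M N := by
    show V * (M * N) * star V = (V * M * star V) * (V * N * star V)
    have : (V * M * star V) * (V * N * star V) = (V * M) * (star V * V) * (N * star V) := by
      noncomm_ring
    rw [this, h2]; noncomm_ring
  map_zero' := by simp
  map_add' M N := by noncomm_ring
  commutes' c := by
    simp only [Algebra.algebraMap_eq_smul_one]
    rw [mul_smul_comm, mul_one, smul_mul_assoc, h1]

noncomputable def diagAlgHom (m : ℕ) : ((Fin m) → ℂ) →ₐ[ℂ] Matrix (Fin m) (Fin m) ℂ :=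
  { Matrix.diagonalRingHom (Fin m) ℂ with
    commutes' := fun _ => rfl }

lemma aeval_mem {B : Type*} [Semiring B] [Algebra ℂ B] (G : Subalgebra ℂ B)
    {x : B} (hx : x ∈ G) (p : ℂ[X]) : aeval x p ∈ G := by
  have := aeval_subalgebra_coe p G ⟨x, hx⟩
  rw [← this]
  exact (aeval (⟨x, hx⟩ : G) p).2

lemma inv_mem_aux {B : Type*} [Ring B] [Algebra ℂ B] (G : Subalgebra ℂ B)
    {x : B} (hx : x ∈ G) (u : Bˣ) (hu : (u : B) = x) :
    ∀ N (p : ℂ[X]), p.natDegree ≤ N → p ≠ 0 → aeval x p = 0 → ((u⁻¹ : Bˣ) : B) ∈ G := by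
  intro N
  induction N with
  | zero =>
    intro p hdeg hp h0
    rw [eq_C_of_natDegree_le_zero hdeg] at h0
    have hc : p.coeff 0 ≠ 0 := by
      intro h; apply hp
      rw [eq_C_of_natDegree_le_zero hdeg, h, map_zero]
    rw [aeval_C, Algebra.algebraMap_eq_smul_one] at h0
    have hone : (1 : B) = 0 := by
      have := congrArg (fun y => (p.coeff 0)⁻¹ • y) h0
      simpa [smul_smul, inv_mul_cancel₀ hc] using this
    have : ((u⁻¹ : Bˣ) : B) = 0 := by
      rw [← mul_one ((u⁻¹ : Bˣ) : B), hone, mul_zero]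
    rw [this]; exact G.zero_mem
  | succ N ih =>
    intro p hdeg hp h0
    have hux : ((u⁻¹ : Bˣ) : B) * x = 1 := by rw [← hu]; exact u.inv_mul
    have key : aeval x p = x * aeval x p.divX + algebraMap ℂ B (p.coeff 0) := by
      conv_lhs => rw [← X_mul_divX_add p]
      rw [map_add, _root_.map_mul, aeval_X, aeval_C]
    by_cases hc : p.coeff 0 = 0
    · have hdvx : x * aeval x p.divX = 0 := by
        rw [key, hc, map_zero, add_zero] at h0; exact h0
      have hdvx0 : aeval x p.divX = 0 := by
        have h3 := congrArg (fun y => ((u⁻¹ : Bˣ) : B) * y) hdvx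
        simpa [← mul_assoc, hux] using h3
      have hdnz : p.divX ≠ 0 := by
        intro h
        apply hp
        rw [← X_mul_divX_add p, h, hc, map_zero, mul_zero, add_zero]
      refine ih p.divX ?_ hdnz hdvx0
      have := natDegree_divX_eq_natDegree_tsub_one (p := p)
      omega
    · have hxd : x * aeval x p.divX = -((p.coeff 0) • (1 : B)) := by
        rw [key] at h0
        rw [← Algebra.algebraMap_eq_smul_one]
        linear_combination (norm := noncomm_ring) h0
      have hd : aeval x p.divX = ((u⁻¹ : Bˣ) : B) * (x * aeval x p.divX) := by
        rw [← mul_assoc, hux, one_mul]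
      rw [hxd] at hd
      have hinv : ((u⁻¹ : Bˣ) : B) = (-(p.coeff 0)⁻¹) • aeval x p.divX := by
        rw [hd, mul_neg, mul_smul_comm, mul_one, smul_neg, neg_smul, neg_neg,
          smul_smul, inv_mul_cancel₀ hc, one_smul]
      rw [hinv]
      exact G.smul_mem (aeval_mem G hx p.divX) _

/-- inverse of a unit in a subalgebra of matrices stays in the subalgebra -/
lemma inv_mem_subalg {m : ℕ} (G : Subalgebra ℂ (Matrix (Fin m) (Fin m) ℂ))
    {M : Matrix (Fin m) (Fin m) ℂ} (hM : M ∈ G) (hu : IsUnit M) : M⁻¹ ∈ G := by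
  obtain ⟨p, hmonic, hzero⟩ := (Algebra.IsIntegral.isIntegral (R := ℂ) M)
  have h := inv_mem_aux G hM hu.unit hu.unit_spec p.natDegree p le_rfl hmonic.ne_zero hzero
  rw [← hu.unit_spec, ← Matrix.coe_units_inv]
  exact h

lemma sqrt_eq_aeval {m : ℕ} {H : Matrix (Fin m) (Fin m) ℂ} (hH : H.PosSemidef) :
    ∃ p : ℂ[X], hH.sqrt = aeval H p := by
  set herm := hH.1
  set V : Matrix (Fin m) (Fin m) ℂ := (herm.eigenvectorUnitary : Matrix (Fin m) (Fin m) ℂ)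
  have h1 : V * star V = 1 := (Matrix.mem_unitaryGroup_iff).mp herm.eigenvectorUnitary.2
  have h2 : star V * V = 1 := (Matrix.mem_unitaryGroup_iff').mp herm.eigenvectorUnitary.2
  set s : Finset ℂ := Finset.univ.image (fun i => (herm.eigenvalues i : ℂ))
  set r : ℂ → ℂ := fun x => ((Real.sqrt x.re : ℝ) : ℂ)
  refine ⟨Lagrange.interpolate s id r, ?_⟩
  have heval : ∀ i, (Lagrange.interpolate s id r).eval ((herm.eigenvalues i : ℝ) : ℂ)
      = ((Real.sqrt (herm.eigenvalues i) : ℝ) : ℂ) := by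
    intro i
    have hmem : ((herm.eigenvalues i : ℝ) : ℂ) ∈ s :=
      Finset.mem_image_of_mem _ (Finset.mem_univ i)
    have := Lagrange.eval_interpolate_at_node (r := r) (Set.injOn_id _) hmem
    simpa [r] using this
  have hdiag : aeval (Matrix.diagonal (RCLike.ofReal ∘ herm.eigenvalues)
        : Matrix (Fin m) (Fin m) ℂ) (Lagrange.interpolate s id r)
      = Matrix.diagonal ((↑) ∘ Real.sqrt ∘ herm.eigenvalues) := by
    have hd : (Matrix.diagonal (RCLike.ofReal ∘ herm.eigenvalues) : Matrix (Fin m) (Fin m) ℂ)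
        = diagAlgHom m (RCLike.ofReal ∘ herm.eigenvalues) := rfl
    rw [hd, aeval_algHom_apply]
    have : (aeval (RCLike.ofReal ∘ herm.eigenvalues : Fin m → ℂ)
        (Lagrange.interpolate s id r)) = fun i =>
          ((Real.sqrt (herm.eigenvalues i) : ℝ) : ℂ) := by
      funext i
      have := aeval_algHom_apply (Pi.evalAlgHom ℂ (fun _ => ℂ) i)
        (RCLike.ofReal ∘ herm.eigenvalues : Fin m → ℂ) (Lagrange.interpolate s id r)
      simp only [Pi.evalAlgHom_apply, Function.comp_apply] at this
      rw [← this]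
      show aeval ((herm.eigenvalues i : ℝ) : ℂ) (Lagrange.interpolate s id r) = _
      rw [show (aeval (((herm.eigenvalues i : ℝ)) : ℂ) : ℂ[X] → ℂ)
          = eval (((herm.eigenvalues i : ℝ)) : ℂ) from coe_aeval_eq_eval _]
      exact heval i
    rw [this]
    rfl
  have hconj : aeval H (Lagrange.interpolate s id r)
      = V * aeval (Matrix.diagonal (RCLike.ofReal ∘ herm.eigenvalues)
          : Matrix (Fin m) (Fin m) ℂ) (Lagrange.interpolate s id r) * star V := by
    conv_lhs => rw [herm.spectral_theorem, Unitary.conjStarAlgAut_apply]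
    exact aeval_algHom_apply (conjAlgHom V h1 h2) _ _
  rw [hconj, hdiag]
  rfl

/-- The unitary polar factor of an invertible `A` with `A, Aᴴ ∈ G` lies in the
unital subalgebra `G`. -/
theorem polar_unitary_factor_mem_subalgebra
    (n : ℕ)
    (G : Subalgebra ℂ (Matrix (Fin n) (Fin n) ℂ))
    (A : Matrix (Fin n) (Fin n) ℂ)
    (hA : IsUnit A) (hAG : A ∈ G) (hAHG : Aᴴ ∈ G)
    (U : Matrix (Fin n) (Fin n) ℂ)
    (hU : U = A * ((Matrix.posSemidef_conjTranspose_mul_self A).sqrt)⁻¹) :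
    Uᴴ * U = 1 ∧ U ∈ G := by
  set hPS := Matrix.posSemidef_conjTranspose_mul_self A
  set P := hPS.sqrt with hPdef
  have hPP : P * P = Aᴴ * A := hPS.sqrt_mul_self'
  have hAH : IsUnit Aᴴ := by
    rw [Matrix.isUnit_iff_isUnit_det A] at hA
    rw [Matrix.isUnit_iff_isUnit_det Aᴴ]
    rw [Matrix.det_conjTranspose]
    exact hA.star
  have hHunit : IsUnit (Aᴴ * A) := hAH.mul hA
  have hPunit : IsUnit P := by
    rw [Matrix.isUnit_iff_isUnit_det P]
    have : IsUnit (P.det * P.det) := by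
      rw [← Matrix.det_mul, hPP, ← Matrix.isUnit_iff_isUnit_det (Aᴴ * A)]
      exact hHunit
    exact (IsUnit.mul_iff.mp this).1
  have hHG : Aᴴ * A ∈ G := G.mul_mem hAHG hAG
  have hPG : P ∈ G := by
    obtain ⟨p, hp⟩ := sqrt_eq_aeval hPS
    rw [hPdef, hp]
    exact aeval_mem G hHG p
  have hPinvG : P⁻¹ ∈ G := inv_mem_subalg G hPG hPunit
  have hPherm : Pᴴ = P := hPS.sqrt_herm'
  constructor
  · have hdet := (Matrix.isUnit_iff_isUnit_det P).mp hPunit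
    rw [hU, Matrix.conjTranspose_mul, Matrix.conjTranspose_nonsing_inv, hPherm]
    have h4 : P⁻¹ * Aᴴ * (A * P⁻¹) = P⁻¹ * (Aᴴ * A) * P⁻¹ := by noncomm_ring
    rw [h4, ← hPP]
    have h5 : P⁻¹ * (P * P) * P⁻¹ = (P⁻¹ * P) * (P * P⁻¹) := by noncomm_ring
    rw [h5, Matrix.nonsing_inv_mul P hdet, Matrix.mul_nonsing_inv P hdet, one_mul]
  · rw [hU]
    exact G.mul_mem hAG hPinvG
end
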